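/- arXiv:2009.03472 — 2 statements merged into one kernel-verified Lean document; each statement's English description precedes it below -/
import Mathlib

section
/- Let γ > 0, let g : ℝ → [0,∞) be integrable with ∫_ℝ g(x) dx = 1, let A = {x ∈ ℝ : g(x) ≥ γ}, and let f : ℝ → ℝ be measurable with ε := sup_{x∈ℝ} |g(x) − f(x)| < ∞. Then | ∫_A (g(x) − f(x)) log g(x) dx | ≤ (1 + 1/γ²) · ε. -/
open MeasureTheory

lemma abs_log_le_aux (γ : ℝ) (hγ : 0 < γ) (z : ℝ) (hz : γ ≤ z) :
    |Real.log z| ≤ (1 + 1 / γ ^ 2) * z := by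
  have hz0 : 0 < z := lt_of_lt_of_le hγ hz
  have hγ2 : 0 < γ ^ 2 := by positivity
  rcases le_or_gt 1 z with h1 | h1
  · rw [abs_of_nonneg (Real.log_nonneg h1)]
    have h2 : Real.log z ≤ z - 1 := Real.log_le_sub_one_of_pos hz0
    nlinarith [div_nonneg (le_of_lt one_pos) hγ2.le]
  · rw [abs_of_nonpos (Real.log_nonpos hz0.le h1.le)]
    have h2 : Real.log z⁻¹ ≤ z⁻¹ - 1 := Real.log_le_sub_one_of_pos (by positivity)
    rw [Real.log_inv] at h2
    have h3 : -Real.log z ≤ z⁻¹ := by linarith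
    have h4 : z⁻¹ ≤ z / γ ^ 2 := by
      rw [inv_le_iff_one_le_mul₀ hz0, div_mul_eq_mul_div, le_div_iff₀ hγ2]
      nlinarith
    have h5 : z / γ ^ 2 ≤ (1 + 1 / γ ^ 2) * z := by
      rw [div_eq_mul_inv, one_div]
      nlinarith [mul_pos hz0 (inv_pos.mpr hγ2)]
    linarith

/-- If `g` is a probability density, `A = {x : g x ≥ γ}` its super-level set at
height `γ > 0`, and `|g - f| ≤ ε` uniformly on `ℝ`, then
`|∫_A (g - f) log g| ≤ (1 + 1/γ²) ε`. -/
theorem integral_diff_log_bound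
    (γ : ℝ) (hγ : 0 < γ) (g : ℝ → ℝ) (hg_meas : Measurable g)
    (hg_nonneg : ∀ x, 0 ≤ g x) (hg_int : Integrable g)
    (hg_one : ∫ x, g x = 1)
    (f : ℝ → ℝ) (hf_meas : Measurable f)
    (ε : ℝ) (hε : ∀ x, |g x - f x| ≤ ε) :
    |∫ x in {x : ℝ | γ ≤ g x}, (g x - f x) * Real.log (g x)| ≤ (1 + 1 / γ ^ 2) * ε := by
  set A : Set ℝ := {x : ℝ | γ ≤ g x} with hA
  have hAm : MeasurableSet A := measurableSet_le measurable_const hg_meas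
  have hε0 : 0 ≤ ε := le_trans (abs_nonneg _) (hε 0)
  have hc0 : 0 ≤ 1 + 1 / γ ^ 2 := by positivity
  set c : ℝ := (1 + 1 / γ ^ 2) * ε with hc
  -- pointwise bound on A
  have hbound : ∀ x ∈ A, |(g x - f x) * Real.log (g x)| ≤ c * g x := by
    intro x hx
    rw [abs_mul]
    calc |g x - f x| * |Real.log (g x)| ≤ ε * ((1 + 1 / γ ^ 2) * g x) :=
          mul_le_mul (hε x) (abs_log_le_aux γ hγ (g x) hx) (abs_nonneg _) hε0
      _ = c * g x := by ring
  have hmeas : AEStronglyMeasurable (fun x => (g x - f x) * Real.log (g x))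
      (volume.restrict A) :=
    ((hg_meas.sub hf_meas).mul (hg_meas.log)).aestronglyMeasurable
  have hcg_int : IntegrableOn (fun x => c * g x) A := (hg_int.const_mul c).restrict
  have hbound_ae : ∀ᵐ x ∂(volume.restrict A),
      ‖(g x - f x) * Real.log (g x)‖ ≤ ‖c * g x‖ := by
    filter_upwards [ae_restrict_mem hAm] with x hx
    rw [Real.norm_eq_abs]
    rw [Real.norm_eq_abs, abs_of_nonneg (mul_nonneg (mul_nonneg hc0 hε0) (hg_nonneg x))]
    exact hbound x hx
  have hint : IntegrableOn (fun x => (g x - f x) * Real.log (g x)) A :=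
    Integrable.mono hcg_int hmeas hbound_ae
  calc |∫ x in A, (g x - f x) * Real.log (g x)|
      ≤ ∫ x in A, |(g x - f x) * Real.log (g x)| := by
        have := norm_integral_le_integral_norm (μ := volume.restrict A)
          (fun x => (g x - f x) * Real.log (g x))
        simp only [Real.norm_eq_abs] at this
        exact this
    _ ≤ ∫ x in A, c * g x := by
        refine integral_mono_ae hint.abs hcg_int ?_
        filter_upwards [ae_restrict_mem hAm] with x hx using hbound x hx
    _ = c * ∫ x in A, g x := integral_const_mul c g
    _ ≤ c * 1 := by
        refine mul_le_mul_of_nonneg_left ?_ (by positivity)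
        rw [← hg_one]
        exact setIntegral_le_integral hg_int
          (Filter.Eventually.of_forall fun x => hg_nonneg x)
    _ = (1 + 1 / γ ^ 2) * ε := by rw [hc, mul_one]
end

section
/- Let γ > 0 and let f, g : ℝ → [0,∞) be integrable with ∫_ℝ f = ∫_ℝ g = 1. Let A = {x ∈ ℝ : g(x) ≥ γ}, assume f(x) > 0 for all x ∈ A, and assume ε := sup_{x∈ℝ} |g(x) − f(x)| ≤ γ/2. Then | (−∫_A g(x) log g(x) dx) − (−∫_A f(x) log f(x) dx) | ≤ (1/γ² + 3/γ + 1) · ε. -/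
open MeasureTheory

lemma entropy_ptwise_bound (γ ε a b : ℝ) (hγ : 0 < γ) (hεn : 0 ≤ ε) (hεγ : ε ≤ γ / 2)
    (hb : γ ≤ b) (hab : |b - a| ≤ ε) :
    |b * Real.log b - a * Real.log a| ≤ ε * (1 / γ + b) + 2 * ε / γ * a := by
  have hab' := abs_le.1 hab
  have ha2 : γ / 2 ≤ a := by linarith
  have ha : 0 < a := by linarith
  have hb0 : 0 < b := lt_of_lt_of_le hγ hb
  have hlogb : |Real.log b| ≤ 1 / γ + b := by
    rcases le_or_gt b 1 with h1 | h1
    · rw [abs_of_nonpos (Real.log_nonpos (le_of_lt hb0) h1)]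
      have h2 : Real.log γ ≤ Real.log b := Real.log_le_log hγ hb
      have h3 : Real.log γ⁻¹ ≤ γ⁻¹ - 1 := Real.log_le_sub_one_of_pos (by positivity)
      rw [Real.log_inv] at h3
      have h4 : (γ:ℝ)⁻¹ = 1/γ := one_div γ |>.symm
      linarith
    · rw [abs_of_nonneg (Real.log_nonneg (le_of_lt h1))]
      have h5 : (0:ℝ) ≤ 1/γ := by positivity
      linarith [Real.log_le_sub_one_of_pos hb0]
  have hlogdiff : |Real.log b - Real.log a| ≤ 2 * ε / γ := by
    rw [abs_le]
    constructor
    · have h1 : Real.log (a / b) ≤ a / b - 1 := Real.log_le_sub_one_of_pos (by positivity)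
      rw [Real.log_div (ne_of_gt ha) (ne_of_gt hb0)] at h1
      have h2 : a / b - 1 = (a - b) / b := by field_simp
      have h3 : (a - b) / b ≤ 2 * ε / γ := by
        rw [div_le_div_iff₀ hb0 hγ]; nlinarith
      linarith
    · have h1 : Real.log (b / a) ≤ b / a - 1 := Real.log_le_sub_one_of_pos (by positivity)
      rw [Real.log_div (ne_of_gt hb0) (ne_of_gt ha)] at h1
      have h2 : b / a - 1 = (b - a) / a := by field_simp
      have h3 : (b - a) / a ≤ 2 * ε / γ := by
        rw [div_le_div_iff₀ ha hγ]; nlinarith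
      linarith
  have key : b * Real.log b - a * Real.log a
      = (b - a) * Real.log b + a * (Real.log b - Real.log a) := by ring
  rw [key]
  calc |(b - a) * Real.log b + a * (Real.log b - Real.log a)|
      ≤ |(b - a) * Real.log b| + |a * (Real.log b - Real.log a)| := abs_add_le _ _
    _ = |b - a| * |Real.log b| + a * |Real.log b - Real.log a| := by
        rw [abs_mul, abs_mul, abs_of_pos ha]
    _ ≤ ε * (1 / γ + b) + a * (2 * ε / γ) := by gcongr
    _ = ε * (1 / γ + b) + 2 * ε / γ * a := by ring

/-- Key deterministic inequality: if `f, g` are probability densities,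
`A = {x : g x ≥ γ}` with `γ > 0`, `f > 0` on `A`, and
`ε := sup_x |g x - f x| ≤ γ/2`, then
`|(-∫_A g log g) - (-∫_A f log f)| ≤ (1/γ² + 3/γ + 1) ε`. -/
theorem entropy_integral_diff_bound
    (γ : ℝ) (hγ : 0 < γ) (f g : ℝ → ℝ)
    (hf_meas : Measurable f) (hg_meas : Measurable g)
    (hf_nonneg : ∀ x, 0 ≤ f x) (hg_nonneg : ∀ x, 0 ≤ g x)
    (hf_int : Integrable f) (hg_int : Integrable g)
    (hf_one : ∫ x, f x = 1) (hg_one : ∫ x, g x = 1)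
    (hf_pos : ∀ x ∈ {x : ℝ | γ ≤ g x}, 0 < f x)
    (ε : ℝ) (hε_nonneg : 0 ≤ ε) (hε_le : ε ≤ γ / 2)
    (hε : ∀ x, |g x - f x| ≤ ε) :
    |(-∫ x in {x : ℝ | γ ≤ g x}, g x * Real.log (g x)) -
      (-∫ x in {x : ℝ | γ ≤ g x}, f x * Real.log (f x))| ≤
      (1 / γ ^ 2 + 3 / γ + 1) * ε := by
  set A : Set ℝ := {x : ℝ | γ ≤ g x} with hA
  have hA_meas : MeasurableSet A := hg_meas measurableSet_Ici
  -- Markov: volume A ≤ ofReal (1/γ)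
  have hlint : ∫⁻ x, ENNReal.ofReal (g x) = 1 := by
    rw [← ofReal_integral_eq_lintegral_ofReal hg_int (ae_of_all _ hg_nonneg), hg_one,
      ENNReal.ofReal_one]
  have hμA : volume A ≤ ENNReal.ofReal (1 / γ) := by
    have hmk := mul_meas_ge_le_lintegral₀ (μ := volume)
      (hg_meas.ennreal_ofReal).aemeasurable (ENNReal.ofReal γ)
    have hset : {x : ℝ | ENNReal.ofReal γ ≤ ENNReal.ofReal (g x)} = A := by
      ext x
      simp only [Set.mem_setOf_eq, hA, ENNReal.ofReal_le_ofReal_iff (hg_nonneg x)]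
    rw [hset, hlint] at hmk
    rw [ENNReal.ofReal_div_of_pos hγ, ENNReal.ofReal_one]
    rw [ENNReal.le_div_iff_mul_le (Or.inl (by simp [hγ])) (Or.inl ENNReal.ofReal_ne_top)]
    rwa [mul_comm]
  have hμA_ne : volume A ≠ ⊤ := ne_top_of_le_ne_top ENNReal.ofReal_ne_top hμA
  have hμA_real : (volume A).toReal ≤ 1 / γ := by
    calc (volume A).toReal ≤ (ENNReal.ofReal (1/γ)).toReal :=
          ENNReal.toReal_mono ENNReal.ofReal_ne_top hμA
      _ = 1/γ := ENNReal.toReal_ofReal (by positivity)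
  -- the difference function and its majorant
  set D : ℝ → ℝ := fun x => g x * Real.log (g x) - f x * Real.log (f x) with hD
  set M : ℝ → ℝ := fun x => ε * (1 / γ + g x) + 2 * ε / γ * f x with hM
  have hM_nonneg : ∀ x, 0 ≤ M x := by
    intro x
    have := hg_nonneg x; have := hf_nonneg x
    have h1 : (0:ℝ) ≤ 1/γ := by positivity
    have h2 : (0:ℝ) ≤ 2 * ε / γ := by positivity
    simp only [hM]
    nlinarith
  have hμA_lt : volume A < ⊤ := lt_of_le_of_lt hμA (by simp)
  have hM_int : IntegrableOn M A := by
    simp only [hM, mul_add]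
    exact ((integrableOn_const hμA_lt.ne).add
      (hg_int.integrableOn.const_mul ε)).add (hf_int.integrableOn.const_mul (2 * ε / γ))
  have hD_bound : ∀ x ∈ A, |D x| ≤ M x := by
    intro x hx
    exact entropy_ptwise_bound γ ε (f x) (g x) hγ hε_nonneg hε_le hx (hε x)
  have hD_meas : Measurable D := by
    apply Measurable.sub
    · exact hg_meas.mul (hg_meas.log)
    · exact hf_meas.mul (hf_meas.log)
  have hD_int : IntegrableOn D A := by
    apply Integrable.mono' hM_int hD_meas.aestronglyMeasurable
    rw [ae_restrict_iff' hA_meas]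
    exact ae_of_all _ fun x hx => by
      rw [Real.norm_eq_abs]; exact hD_bound x hx
  -- bound on ∫ M
  have hfA : ∫ x in A, f x ≤ 1 := by
    rw [← hf_one]
    exact setIntegral_le_integral hf_int (ae_of_all _ hf_nonneg)
  have hgA : ∫ x in A, g x ≤ 1 := by
    rw [← hg_one]
    exact setIntegral_le_integral hg_int (ae_of_all _ hg_nonneg)
  have hM_val : ∫ x in A, M x ≤ (1 / γ ^ 2 + 3 / γ + 1) * ε := by
    have i1 : IntegrableOn (fun _ : ℝ => ε * (1/γ)) A := integrableOn_const hμA_lt.ne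
    have i2 : IntegrableOn (fun x => ε * g x) A := hg_int.integrableOn.const_mul ε
    have i3 : IntegrableOn (fun x => 2 * ε / γ * f x) A :=
      hf_int.integrableOn.const_mul (2 * ε / γ)
    have i12 : IntegrableOn (fun x => ε * (1/γ) + ε * g x) A := i1.add i2
    have e1 : ∫ x in A, M x = ε * (1/γ) * (volume A).toReal + ε * (∫ x in A, g x)
        + (2 * ε / γ) * (∫ x in A, f x) := by
      simp only [hM, mul_add]
      rw [integral_add i12 i3, integral_add i1 i2, integral_const, integral_const_mul,
        integral_const_mul]
      simp only [smul_eq_mul, measureReal_restrict_apply_univ, Measure.real, Measure.restrict_apply_univ]; ring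
    rw [e1]
    have h2 : ε * (1/γ) * (volume A).toReal ≤ ε * (1/γ) * (1/γ) := by
      have : (0:ℝ) ≤ ε * (1/γ) := by positivity
      exact mul_le_mul_of_nonneg_left hμA_real this
    have h3 : ε * (∫ x in A, g x) ≤ ε * 1 := mul_le_mul_of_nonneg_left hgA hε_nonneg
    have h4 : (2 * ε / γ) * (∫ x in A, f x) ≤ (2 * ε / γ) * 1 :=
      mul_le_mul_of_nonneg_left hfA (by positivity)
    have h7 : (0:ℝ) ≤ 1/γ * ε := by positivity
    have h8 : ε * (1/γ) * (1/γ) + ε * 1 + (2 * ε / γ) * 1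
        = (1 / γ ^ 2 + 2 / γ + 1) * ε := by ring
    have h9 : (1 / γ ^ 2 + 2 / γ + 1) * ε ≤ (1 / γ ^ 2 + 3 / γ + 1) * ε := by
      have hd : (1 / γ ^ 2 + 3 / γ + 1) * ε - (1 / γ ^ 2 + 2 / γ + 1) * ε = 1/γ * ε := by
        ring
      linarith
    linarith
  -- case split on integrability
  by_cases hgl : IntegrableOn (fun x => g x * Real.log (g x)) A
  · have hfl : IntegrableOn (fun x => f x * Real.log (f x)) A := by
      have heq : (fun x => f x * Real.log (f x))
          = (fun x => g x * Real.log (g x)) - D := by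
        funext x; simp only [Pi.sub_apply, hD]; ring
      rw [heq]; exact hgl.sub hD_int
    have hsplit : (-∫ x in A, g x * Real.log (g x)) - (-∫ x in A, f x * Real.log (f x))
        = -∫ x in A, D x := by
      rw [integral_sub hgl hfl]; ring
    rw [hsplit, abs_neg]
    calc |∫ x in A, D x| ≤ ∫ x in A, M x := by
          rw [← Real.norm_eq_abs]
          apply norm_integral_le_of_norm_le hM_int
          rw [ae_restrict_iff' hA_meas]
          exact ae_of_all _ fun x hx => by
            rw [Real.norm_eq_abs]; exact hD_bound x hx
      _ ≤ (1 / γ ^ 2 + 3 / γ + 1) * ε := hM_val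
  · have hfl : ¬ IntegrableOn (fun x => f x * Real.log (f x)) A := by
      intro h
      apply hgl
      have heq : (fun x => g x * Real.log (g x))
          = (fun x => f x * Real.log (f x)) + D := by
        funext x; simp only [Pi.add_apply, hD]; ring
      rw [heq]; exact h.add hD_int
    rw [integral_undef hgl, integral_undef hfl]
    simp only [neg_zero, sub_zero, abs_zero]
    positivity
end
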